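/- Let H = ⟨4,6,7,9⟩ and let n ≥ 9 be odd. Then S(2H + nℕ₀) = {8, 12, 14, 18, n, n+12, n+14, n+18}. -/

import Mathlib

/-- A numerical semigroup: a submonoid of ℕ with finite complement. -/
structure NumSemigroup where
  carrier : Set ℕ
  zero_mem : 0 ∈ carrier
  add_mem : ∀ a ∈ carrier, ∀ b ∈ carrier, a + b ∈ carrier
  cofinite : carrierᶜ.Finite

namespace NumSemigroup

/-- The genus: cardinality of the complement in ℕ. -/
noncomputable def genus (H : NumSemigroup) : ℕ := H.carrierᶜ.ncard

/-- `m` is the least positive element of `H` (so `H` is an `m`-semigroup). -/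
def IsMult (H : NumSemigroup) (m : ℕ) : Prop :=
  IsLeast {x | x ∈ H.carrier ∧ 0 < x} m

/-- `c` is the conductor: the least `c` with `c + ℕ ⊆ H`. -/
def IsConductor (H : NumSemigroup) (c : ℕ) : Prop :=
  IsLeast {c | ∀ x, c ≤ x → x ∈ H.carrier} c

/-- `n` is the least odd element of `H`, i.e. `n = n(H)`. -/
def IsLeastOdd (H : NumSemigroup) (n : ℕ) : Prop :=
  IsLeast {x | x ∈ H.carrier ∧ Odd x} n

end NumSemigroup

/-- `d₂(A) = {h/2 : h ∈ A even}`. -/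
def d2 (A : Set ℕ) : Set ℕ := {x | 2 * x ∈ A}

/-- `2A + nℕ₀ = {2h + ni : h ∈ A, i ∈ ℕ₀}`. -/
def doubleAdd (A : Set ℕ) (n : ℕ) : Set ℕ :=
  {x | ∃ h ∈ A, ∃ i : ℕ, x = 2 * h + n * i}

/-- `2A + aℕ₀ + bℕ₀ = {2h + ai + bj : h ∈ A, i, j ∈ ℕ₀}`. -/
def doubleAdd2 (A : Set ℕ) (a b : ℕ) : Set ℕ :=
  {x | ∃ h ∈ A, ∃ i : ℕ, ∃ j : ℕ, x = 2 * h + a * i + b * j}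

/-- The standard basis `S(A) = {m, s₁, …, s_{m-1}}` of an `m`-semigroup,
where `sᵢ = min {h ∈ A : h ≡ i mod m}`. -/
def stdBasis (A : Set ℕ) (m : ℕ) : Set ℕ :=
  insert m {s | ∃ i, 0 < i ∧ i < m ∧ IsLeast {h | h ∈ A ∧ h % m = i} s}

/-- `A` (of genus `g`) is symmetric: `z ∈ A ↔ 2g - 1 - z ∉ A` for all integers `z`. -/
def SymSgp (A : Set ℕ) (g : ℕ) : Prop :=
  ∀ z : ℤ, (∃ a ∈ A, (a : ℤ) = z) ↔ ¬ ∃ a ∈ A, (a : ℤ) = 2 * (g : ℤ) - 1 - z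

/-- The submonoid of ℕ generated by a set, as a set: `⟨a₁,…,a_k⟩`. -/
def genSG (s : Set ℕ) : Set ℕ := (AddSubmonoid.closure s : AddSubmonoid ℕ)

set_option maxHeartbeats 1000000 in
lemma genSG_char : genSG {4, 6, 7, 9} = {x : ℕ | x = 0 ∨ x = 4 ∨ 6 ≤ x} := by
  apply Set.Subset.antisymm
  · intro x hx
    induction hx using AddSubmonoid.closure_induction with
    | mem x h => simp only [Set.mem_insert_iff, Set.mem_singleton_iff] at h
                 simp only [Set.mem_setOf_eq]; omega
    | zero => simp
    | add x y _ _ hx hy => simp only [Set.mem_setOf_eq] at *; omega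
  · have key : ∀ x : ℕ, 6 ≤ x → x ∈ genSG {4, 6, 7, 9} := by
      intro x
      induction x using Nat.strong_induction_on with
      | _ x ih =>
        intro hx
        have g4 : (4 : ℕ) ∈ genSG {4,6,7,9} := AddSubmonoid.subset_closure (by simp)
        have g6 : (6 : ℕ) ∈ genSG {4,6,7,9} := AddSubmonoid.subset_closure (by simp)
        have g7 : (7 : ℕ) ∈ genSG {4,6,7,9} := AddSubmonoid.subset_closure (by simp)
        have g9 : (9 : ℕ) ∈ genSG {4,6,7,9} := AddSubmonoid.subset_closure (by simp)
        rcases Nat.lt_or_ge x 10 with h | h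
        · interval_cases x
          · exact g6
          · exact g7
          · exact AddSubmonoid.add_mem _ g4 g4
          · exact g9
        · have : (x - 4) ∈ genSG {4,6,7,9} := ih (x - 4) (by omega) (by omega)
          have := AddSubmonoid.add_mem _ this g4
          rw [show x = x - 4 + 4 by omega]
          exact this
    intro x hx
    simp only [Set.mem_setOf_eq] at hx
    rcases hx with rfl | rfl | h
    · exact AddSubmonoid.zero_mem _
    · exact AddSubmonoid.subset_closure (by simp)
    · exact key x h

lemma dA_char (n : ℕ) (hodd : n % 2 = 1) (hn : 9 ≤ n) (x : ℕ) :
    x ∈ doubleAdd (genSG {4, 6, 7, 9}) n ↔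
      (x % 2 = 0 ∧ (x = 0 ∨ x = 8 ∨ 12 ≤ x)) ∨
      (x % 2 = 1 ∧ (x = n ∨ x = n + 8 ∨ n + 12 ≤ x)) := by
  rw [genSG_char]
  constructor
  · rintro ⟨h, hh, i, rfl⟩
    simp only [Set.mem_setOf_eq] at hh
    rcases Nat.even_or_odd i with ⟨j, rfl⟩ | ⟨j, rfl⟩
    · have hj : (n * j = 0 ∧ j = 0) ∨ 9 ≤ n * j := by
        rcases Nat.eq_zero_or_pos j with rfl | hj
        · left; exact ⟨Nat.mul_zero n, rfl⟩
        · right; calc 9 ≤ n := hn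
                 _ = n * 1 := by ring
                 _ ≤ n * j := Nat.mul_le_mul_left n hj
      have : n * (j + j) = 2 * (n * j) := by ring
      omega
    · have hj : (n * j = 0 ∧ j = 0) ∨ 9 ≤ n * j := by
        rcases Nat.eq_zero_or_pos j with rfl | hj
        · left; exact ⟨Nat.mul_zero n, rfl⟩
        · right; calc 9 ≤ n := hn
                 _ = n * 1 := by ring
                 _ ≤ n * j := Nat.mul_le_mul_left n hj
      have : n * (2 * j + 1) = 2 * (n * j) + n := by ring
      omega
  · rintro (⟨he, h⟩ | ⟨he, h⟩)
    · refine ⟨x / 2, ?_, 0, by omega⟩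
      simp only [Set.mem_setOf_eq]; omega
    · refine ⟨(x - n) / 2, ?_, 1, by omega⟩
      simp only [Set.mem_setOf_eq]; omega

set_option maxHeartbeats 1000000 in
theorem stmt17 (n : ℕ) (hodd : Odd n) (hn : 9 ≤ n) :
    stdBasis (doubleAdd (genSG {4, 6, 7, 9}) n) 8 =
      {8, 12, 14, 18, n, n + 12, n + 14, n + 18} := by
  have h2 : n % 2 = 1 := Nat.odd_iff.mp hodd
  have hA := dA_char n h2 hn
  set A := doubleAdd (genSG {4, 6, 7, 9}) n with hAdef
  have mem12 : 12 ∈ A := by rw [hA]; omega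
  have mem14 : 14 ∈ A := by rw [hA]; omega
  have mem18 : 18 ∈ A := by rw [hA]; omega
  have memn : n ∈ A := by rw [hA]; omega
  have memn12 : n + 12 ∈ A := by rw [hA]; omega
  have memn14 : n + 14 ∈ A := by rw [hA]; omega
  have memn18 : n + 18 ∈ A := by rw [hA]; omega
  apply Set.Subset.antisymm
  · intro x hx
    simp only [stdBasis, Set.mem_insert_iff, Set.mem_setOf_eq] at hx
    simp only [Set.mem_insert_iff, Set.mem_singleton_iff]
    rcases hx with rfl | ⟨i, hi0, hi8, ⟨⟨hxA, hxm⟩, hlb⟩⟩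
    · left; rfl
    rw [hA] at hxA
    have hlb' : ∀ y, y ∈ A → y % 8 = i → x ≤ y := fun y hy hm => hlb ⟨hy, hm⟩
    have c12 : 12 % 8 = i → x ≤ 12 := hlb' 12 mem12
    have c14 : 14 % 8 = i → x ≤ 14 := hlb' 14 mem14
    have c18 : 18 % 8 = i → x ≤ 18 := hlb' 18 mem18
    have cn : n % 8 = i → x ≤ n := hlb' n memn
    have cn12 : (n + 12) % 8 = i → x ≤ n + 12 := hlb' (n+12) memn12
    have cn14 : (n + 14) % 8 = i → x ≤ n + 14 := hlb' (n+14) memn14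
    have cn18 : (n + 18) % 8 = i → x ≤ n + 18 := hlb' (n+18) memn18
    clear hlb hlb'
    rcases hxA with ⟨hp, hv⟩ | ⟨hp, hv⟩
    · have h8 : x % 8 = 2 ∨ x % 8 = 4 ∨ x % 8 = 6 := by omega
      rcases h8 with h8 | h8 | h8
      · have := c18 (by omega); omega
      · have := c12 (by omega); omega
      · have := c14 (by omega); omega
    · have h8 : x % 8 = n % 8 ∨ x % 8 = (n + 2) % 8 ∨ x % 8 = (n + 4) % 8 ∨ x % 8 = (n + 6) % 8 := by
        omega
      rcases h8 with h8 | h8 | h8 | h8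
      · have := cn (by omega); omega
      · have := cn18 (by omega); omega
      · have := cn12 (by omega); omega
      · have := cn14 (by omega); omega
  · intro x hx
    simp only [Set.mem_insert_iff, Set.mem_singleton_iff] at hx
    simp only [stdBasis, Set.mem_insert_iff, Set.mem_setOf_eq]
    rcases hx with rfl | rfl | rfl | rfl | h | h | h | h
    · left; rfl
    · refine Or.inr ⟨4, by norm_num, by norm_num, ⟨mem12, by norm_num⟩, ?_⟩
      intro h ⟨hh, hm⟩; rw [hA] at hh; omega
    · refine Or.inr ⟨6, by norm_num, by norm_num, ⟨mem14, by norm_num⟩, ?_⟩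
      intro h ⟨hh, hm⟩; rw [hA] at hh; omega
    · refine Or.inr ⟨2, by norm_num, by norm_num, ⟨mem18, by norm_num⟩, ?_⟩
      intro h ⟨hh, hm⟩; rw [hA] at hh; omega
    · refine Or.inr ⟨x % 8, by omega, by omega, ⟨by rw [h]; exact memn, rfl⟩, ?_⟩
      intro y ⟨hh, hm⟩; rw [hA] at hh; omega
    · refine Or.inr ⟨x % 8, by omega, by omega, ⟨by rw [h]; exact memn12, rfl⟩, ?_⟩
      intro y ⟨hh, hm⟩; rw [hA] at hh; omega
    · refine Or.inr ⟨x % 8, by omega, by omega, ⟨by rw [h]; exact memn14, rfl⟩, ?_⟩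
      intro y ⟨hh, hm⟩; rw [hA] at hh; omega
    · refine Or.inr ⟨x % 8, by omega, by omega, ⟨by rw [h]; exact memn18, rfl⟩, ?_⟩
      intro y ⟨hh, hm⟩; rw [hA] at hh; omega
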